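/- For p = 1, set λ̄ = (min_{i} |f_i - f_{i-1}|) / (k (max_i L_i)(max f - min f)), assuming f is not constant. Then for every λ < λ̄, every minimizer of G(v) = Σ_{i=2}^k |v_i - v_{i-1}| + λ Σ_{i=1}^k L_i |f_i - v_i| taking values in {f_1,…,f_k} is a constant vector. -/
import Mathlib


/-- Predecessor index: `i - 1` (and `0` maps to `0`). -/
def pred {k : ℕ} (i : Fin k) : Fin k :=
  ⟨i.val - 1, Nat.lt_of_le_of_lt (Nat.sub_le _ _) i.isLt⟩

/-- The discrete energy `G(v) = ∑_{i≥2} |v_i - v_{i-1}| + λ ∑_i L_i |f_i - v_i|^p`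
(indices written with `Fin k`, i.e. `0,…,k-1`). -/
noncomputable def G (k : ℕ) (lam p : ℝ) (L f : Fin k → ℝ) (v : Fin k → ℝ) : ℝ :=
  (∑ i : Fin k, if i.val = 0 then 0 else |v i - v (pred i)|) +
    lam * ∑ i : Fin k, L i * |f i - v i| ^ p

/-- The discrete energy with `L^1` fidelity term (`p = 1`). -/
noncomputable def G1 (k : ℕ) (lam : ℝ) (L f : Fin k → ℝ) (v : Fin k → ℝ) : ℝ :=
  (∑ i : Fin k, if i.val = 0 then 0 else |v i - v (pred i)|) +
    lam * ∑ i : Fin k, L i * |f i - v i|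

lemma chain_bound {k : ℕ} (u : Fin k → ℝ) :
    ∀ n (h : n < k), |u ⟨n, h⟩ - u ⟨0, Nat.lt_of_le_of_lt (Nat.zero_le n) h⟩| ≤
      ∑ i ∈ Finset.univ.filter (fun i : Fin k => i.val ≤ n),
        (if i.val = 0 then 0 else |u i - u (pred i)|) := by
  intro n
  induction n with
  | zero =>
    intro h
    simp only [sub_self, abs_zero]
    apply Finset.sum_nonneg
    intro i _
    split <;> simp [abs_nonneg]
  | succ n ih =>
    intro h
    have hn : n < k := Nat.lt_of_succ_lt h
    have hins : Finset.univ.filter (fun i : Fin k => i.val ≤ n + 1)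
        = insert (⟨n + 1, h⟩ : Fin k) (Finset.univ.filter (fun i : Fin k => i.val ≤ n)) := by
      ext i
      simp only [Finset.mem_filter, Finset.mem_insert, Finset.mem_univ, true_and, Fin.ext_iff]
      omega
    have hnotmem : (⟨n + 1, h⟩ : Fin k) ∉ Finset.univ.filter (fun i : Fin k => i.val ≤ n) := by
      simp
    rw [hins, Finset.sum_insert hnotmem]
    have hpred : pred (⟨n + 1, h⟩ : Fin k) = ⟨n, hn⟩ := by
      simp [pred]
    have htri : |u ⟨n + 1, h⟩ - u ⟨0, Nat.lt_of_le_of_lt (Nat.zero_le _) h⟩|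
        ≤ |u ⟨n + 1, h⟩ - u ⟨n, hn⟩| + |u ⟨n, hn⟩ - u ⟨0, Nat.lt_of_le_of_lt (Nat.zero_le _) hn⟩| := by
      have := abs_sub_le (u ⟨n + 1, h⟩) (u ⟨n, hn⟩) (u ⟨0, Nat.lt_of_le_of_lt (Nat.zero_le _) hn⟩)
      convert this using 3
    have hterm : (if (⟨n + 1, h⟩ : Fin k).val = 0 then (0:ℝ) else |u ⟨n + 1, h⟩ - u (pred ⟨n + 1, h⟩)|)
        = |u ⟨n + 1, h⟩ - u ⟨n, hn⟩| := by
      rw [hpred]; simp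
    rw [hterm]
    exact le_trans htri (by linarith [ih hn])

lemma chain_bound' {k : ℕ} (u : Fin k → ℝ) (i : Fin k) (h0 : 0 < k) :
    |u i - u ⟨0, h0⟩| ≤ ∑ i : Fin k, (if i.val = 0 then 0 else |u i - u (pred i)|) := by
  have := chain_bound u i.val i.isLt
  have hsub : ∑ j ∈ Finset.univ.filter (fun j : Fin k => j.val ≤ i.val),
        (if j.val = 0 then (0:ℝ) else |u j - u (pred j)|)
      ≤ ∑ j : Fin k, (if j.val = 0 then 0 else |u j - u (pred j)|) := by
    apply Finset.sum_le_sum_of_subset_of_nonneg (Finset.filter_subset _ _)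
    intro j _ _
    split <;> simp [abs_nonneg]
  calc |u i - u ⟨0, h0⟩| = |u ⟨i.val, i.isLt⟩ - u ⟨0, h0⟩| := by rw [Fin.eta]
    _ ≤ _ := le_trans this hsub

/-- for `p = 1` and
`λ < λ̄ = (minᵢ |fᵢ - fᵢ₋₁|)/(k (maxᵢ Lᵢ)(max f - min f))`, every minimizer of `G`
with values among those of `f` is constant. -/
theorem stmt8 (k : ℕ) (hk : 2 ≤ k)
    (L f : Fin k → ℝ) (hL : ∀ i, 0 < L i)
    (hfne : ∃ i : Fin k, i.val ≠ 0 ∧ f i ≠ f (pred i)) :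
    ∀ lam : ℝ, 0 < lam →
      lam < sInf {x : ℝ | ∃ i : Fin k, i.val ≠ 0 ∧ f i ≠ f (pred i) ∧ x = |f i - f (pred i)|} /
        ((k : ℝ) * sSup (Set.range L) * (sSup (Set.range f) - sInf (Set.range f))) →
      ∀ u : Fin k → ℝ, (∀ i : Fin k, u i ∈ Set.range f) →
        (∀ v : Fin k → ℝ, G1 k lam L f u ≤ G1 k lam L f v) →
        ∀ i j : Fin k, u i = u j := by
  intro lam hlam hlt u _hurange hmin
  by_contra hne
  push_neg at hne
  obtain ⟨a, b, hab⟩ := hne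
  have h0 : 0 < k := by omega
  set T := ∑ i : Fin k, (if i.val = 0 then (0:ℝ) else |u i - u (pred i)|) with hTdef
  have hchain : ∀ i : Fin k, |u i - u ⟨0, h0⟩| ≤ T := fun i => chain_bound' u i h0
  -- T > 0
  have hTpos : 0 < T := by
    have h1 := hchain a
    have h2 := hchain b
    have h3 : |u a - u b| ≤ |u a - u ⟨0, h0⟩| + |u ⟨0, h0⟩ - u b| := abs_sub_le _ _ _
    have h4 : |u ⟨0, h0⟩ - u b| = |u b - u ⟨0, h0⟩| := abs_sub_comm _ _
    have h5 : 0 < |u a - u b| := abs_pos.mpr (sub_ne_zero.mpr hab)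
    linarith
  -- constants m, M, R
  obtain ⟨i0, hi0, hfi0⟩ := hfne
  set S := {x : ℝ | ∃ i : Fin k, i.val ≠ 0 ∧ f i ≠ f (pred i) ∧ x = |f i - f (pred i)|} with hSdef
  set m := sInf S with hmdef
  set M := sSup (Set.range L) with hMdef
  set R := sSup (Set.range f) - sInf (Set.range f) with hRdef
  have hSbd : BddBelow S := by
    refine ⟨0, fun x hx => ?_⟩
    obtain ⟨i, _, _, hx⟩ := hx
    rw [hx]; exact abs_nonneg _
  have hmem : |f i0 - f (pred i0)| ∈ S := ⟨i0, hi0, hfi0, rfl⟩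
  have hm_le : m ≤ |f i0 - f (pred i0)| := csInf_le hSbd hmem
  have hfbddA : BddAbove (Set.range f) := (Set.finite_range f).bddAbove
  have hfbddB : BddBelow (Set.range f) := (Set.finite_range f).bddBelow
  have hfleA : ∀ i, f i ≤ sSup (Set.range f) := fun i => le_csSup hfbddA ⟨i, rfl⟩
  have hfleB : ∀ i, sInf (Set.range f) ≤ f i := fun i => csInf_le hfbddB ⟨i, rfl⟩
  have habsR : |f i0 - f (pred i0)| ≤ R := by
    rw [abs_sub_le_iff]
    constructor <;> [skip; skip] <;>
      · have := hfleA i0; have := hfleB i0; have := hfleA (pred i0); have := hfleB (pred i0)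
        rw [hRdef]; linarith
  have hRpos : 0 < R :=
    lt_of_lt_of_le (abs_pos.mpr (sub_ne_zero.mpr hfi0)) habsR
  have hmR : m ≤ R := le_trans hm_le habsR
  have hLbdd : BddAbove (Set.range L) := (Set.finite_range L).bddAbove
  have hLle : ∀ i, L i ≤ M := fun i => le_csSup hLbdd ⟨i, rfl⟩
  have hMpos : 0 < M := lt_of_lt_of_le (hL ⟨0, h0⟩) (hLle ⟨0, h0⟩)
  have hkpos : (0:ℝ) < (k:ℝ) := by exact_mod_cast h0
  have hden : (0:ℝ) < (k : ℝ) * M * R := by positivity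
  have hlt' : lam * ((k : ℝ) * M * R) < m := (lt_div_iff₀ hden).mp hlt
  have hlamkM : lam * (k : ℝ) * M < 1 := by
    nlinarith
  -- compare with constant competitor
  have hmin' := hmin (fun _ => u ⟨0, h0⟩)
  have hGc : G1 k lam L f (fun _ => u ⟨0, h0⟩)
      = lam * ∑ i : Fin k, L i * |f i - u ⟨0, h0⟩| := by
    unfold G1
    simp
  have hGu : G1 k lam L f u = T + lam * ∑ i : Fin k, L i * |f i - u i| := rfl
  rw [hGu, hGc] at hmin'
  have hbound : ∑ i : Fin k, L i * |f i - u ⟨0, h0⟩|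
      ≤ (∑ i : Fin k, L i * |f i - u i|) + (k : ℝ) * M * T := by
    have h1 : ∀ i : Fin k, L i * |f i - u ⟨0, h0⟩| ≤ L i * |f i - u i| + M * T := by
      intro i
      have htri : |f i - u ⟨0, h0⟩| ≤ |f i - u i| + |u i - u ⟨0, h0⟩| := abs_sub_le _ _ _
      have h2 : |f i - u ⟨0, h0⟩| ≤ |f i - u i| + T := le_trans htri (by linarith [hchain i])
      have h3 : L i * |f i - u ⟨0, h0⟩| ≤ L i * (|f i - u i| + T) :=
        mul_le_mul_of_nonneg_left h2 (hL i).le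
      have h4 : L i * T ≤ M * T := mul_le_mul_of_nonneg_right (hLle i) hTpos.le
      nlinarith
    calc ∑ i : Fin k, L i * |f i - u ⟨0, h0⟩|
        ≤ ∑ i : Fin k, (L i * |f i - u i| + M * T) := Finset.sum_le_sum (fun i _ => h1 i)
      _ = (∑ i : Fin k, L i * |f i - u i|) + (k : ℝ) * M * T := by
          rw [Finset.sum_add_distrib, Finset.sum_const, Finset.card_univ, Fintype.card_fin]
          push_cast; ring
  have hfinal : T + lam * ∑ i : Fin k, L i * |f i - u i|
      ≤ lam * ((∑ i : Fin k, L i * |f i - u i|) + (k : ℝ) * M * T) :=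
    le_trans hmin' (mul_le_mul_of_nonneg_left hbound hlam.le)
  nlinarith
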